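/- arXiv:2508.20342 — 2 statements merged into one kernel-verified Lean document; each statement's English description precedes it below -/
import Mathlib

section
/- Let 0 < α < n and Φ ∈ S(ℝⁿ) with supp(Φ) ⊂ B_{1/4}(0). Then there is C = C(Φ,n,α) such that sup_{t>0} |(Φ_t^d ∗ I_α a)(j)| ≤ C(#Q)^{α/n − 1/p} for all j ∈ ℤⁿ and all sequences a supported in a discrete cube Q with ‖a‖_{ℓ^∞} ≤ (#Q)^{−1/p}. -/
open scoped BigOperators ENNReal

noncomputable section

/-- Euclidean norm of an integer vector in `ℤⁿ`. -/
def znorm {n : ℕ} (j : Fin n → ℤ) : ℝ := Real.sqrt (∑ l, ((j l : ℝ)) ^ 2)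

/-- `ℓ^∞` norm of an integer vector, as a natural number. -/
def zinf {n : ℕ} (j : Fin n → ℤ) : ℕ := Finset.univ.sup fun l => (j l).natAbs

/-- The discrete cube centered at `k0` with "radius" `m` (side length `2m+1`),
i.e. `{i : |i - k0|_∞ ≤ m}`. -/
def dcube {n : ℕ} (k0 : Fin n → ℤ) (m : ℕ) : Finset (Fin n → ℤ) :=
  Finset.Icc (fun l => k0 l - m) (fun l => k0 l + m)

/-- The discrete Riesz potential `(I_α b)(j) = ∑_{i ≠ j} b(i) |i-j|^{α-n}`. -/
def rieszPot {n : ℕ} (α : ℝ) (b : (Fin n → ℤ) → ℝ) (j : Fin n → ℤ) : ℝ :=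
  ∑' i : {i : Fin n → ℤ // i ≠ j}, b i.1 * znorm (i.1 - j) ^ (α - n)

/-- Embedding of `ℤⁿ` into Euclidean space `ℝⁿ`. -/
def toE {n : ℕ} (j : Fin n → ℤ) : EuclideanSpace ℝ (Fin n) := WithLp.toLp 2 (fun l => (j l : ℝ))

/-- The discretized dilation `Φ_t^d(j) = t^{-n} Φ(j/t)` for `j ≠ 0`, and `Φ_t^d(0) = 0`. -/
def phid {n : ℕ} (Φ : SchwartzMap (EuclideanSpace ℝ (Fin n)) ℝ) (t : ℝ) (j : Fin n → ℤ) : ℝ :=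
  if j = 0 then 0 else t ^ (-(n : ℝ)) * Φ (t⁻¹ • toE j)

/-- Discrete convolution `(b ∗ c)(j) = ∑_i b(i) c(j-i)`. -/
def dconv {n : ℕ} (b c : (Fin n → ℤ) → ℝ) (j : Fin n → ℤ) : ℝ :=
  ∑' i : Fin n → ℤ, b i * c (j - i)

/-- The maximal function `sup_{t>0} |(Φ_t^d ∗ b)(j)|`, valued in `ℝ≥0∞`. -/
def maxFn {n : ℕ} (Φ : SchwartzMap (EuclideanSpace ℝ (Fin n)) ℝ) (b : (Fin n → ℤ) → ℝ)
    (j : Fin n → ℤ) : ℝ≥0∞ :=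
  ⨆ (t : ℝ) (_ : 0 < t), ENNReal.ofReal |dconv (phid Φ t) b j|

/-- The `ℓ^p` quasinorm (`0 < p < ∞`) of a real sequence on `ℤⁿ`, valued in `ℝ≥0∞`. -/
def elp {n : ℕ} (p : ℝ) (f : (Fin n → ℤ) → ℝ) : ℝ≥0∞ :=
  (∑' j : Fin n → ℤ, ENNReal.ofReal |f j| ^ p) ^ (1 / p)

/-- The `ℓ^p` quasinorm of an `ℝ≥0∞`-valued sequence on `ℤⁿ`. -/
def elpE {n : ℕ} (p : ℝ) (f : (Fin n → ℤ) → ℝ≥0∞) : ℝ≥0∞ :=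
  (∑' j : Fin n → ℤ, f j ^ p) ^ (1 / p)

/-- The discrete Hardy space quasinorm `‖b‖_{H^p} = ‖b‖_{ℓ^p} + ‖sup_{t>0}|Φ_t^d ∗ b|‖_{ℓ^p}`. -/
def hpNorm {n : ℕ} (Φ : SchwartzMap (EuclideanSpace ℝ (Fin n)) ℝ) (p : ℝ)
    (b : (Fin n → ℤ) → ℝ) : ℝ≥0∞ :=
  elp p b + elpE p (maxFn Φ b)

/-- A `(p, ∞, N)`-atom supported in the discrete cube `dcube k0 m`. -/
def IsDiscreteAtom {n : ℕ} (p : ℝ) (N : ℕ) (k0 : Fin n → ℤ) (m : ℕ)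
    (a : (Fin n → ℤ) → ℝ) : Prop :=
  (∀ j, j ∉ dcube k0 m → a j = 0) ∧
  (∀ j, |a j| ≤ ((dcube k0 m).card : ℝ) ^ (-(1 / p))) ∧
  (∀ β : Fin n → ℕ, (∑ l, β l) ≤ N →
    ∑ j ∈ dcube k0 m, (∏ l, ((j l : ℝ)) ^ β l) * a j = 0)

/-- The centered discrete fractional maximal operator
`(M_α b)(j) = sup_m (#Q_{j,m})^{α/n - 1} ∑_{i ∈ Q_{j,m}} |b(i)|`. -/
def fracMax {n : ℕ} (α : ℝ) (b : (Fin n → ℤ) → ℝ) (j : Fin n → ℤ) : ℝ≥0∞ :=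
  ⨆ m : ℕ, ENNReal.ofReal
    ((((dcube j m).card : ℝ) ^ (α / n - 1)) * ∑ i ∈ dcube j m, |b i|)

/-- The Taylor polynomial of degree `N - 1` of `f` centered at `c`, evaluated at `x`. -/
def taylorPoly {n : ℕ} (f : EuclideanSpace ℝ (Fin n) → ℝ) (c x : EuclideanSpace ℝ (Fin n))
    (N : ℕ) : ℝ :=
  ∑ r ∈ Finset.range N, (1 / r.factorial : ℝ) * iteratedFDeriv ℝ r f c (fun _ => x - c)


section AuxLemmas

open Finset Real

variable {n : ℕ}

lemma znorm_nonneg (v : Fin n → ℤ) : 0 ≤ znorm v := Real.sqrt_nonneg _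

lemma abs_le_znorm (v : Fin n → ℤ) (l : Fin n) : |((v l : ℝ))| ≤ znorm v := by
  rw [← Real.sqrt_sq_eq_abs]
  exact Real.sqrt_le_sqrt (Finset.single_le_sum
    (fun i _ => sq_nonneg ((v i : ℝ))) (Finset.mem_univ l))

lemma zinf_le_znorm (v : Fin n → ℤ) : ((zinf v : ℕ) : ℝ) ≤ znorm v := by
  rcases Finset.univ.eq_empty_or_nonempty (α := Fin n) with h | h
  · simp [zinf, h, znorm, Finset.sum_empty]
  · obtain ⟨l, -, hl⟩ := Finset.exists_mem_eq_sup Finset.univ h (fun l => (v l).natAbs)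
    have h2 : (((v l).natAbs : ℕ) : ℝ) = |((v l : ℝ))| := by
      simp [Nat.cast_natAbs]
    rw [zinf, hl, h2]
    exact abs_le_znorm v l

lemma one_le_zinf {v : Fin n → ℤ} (hv : v ≠ 0) : 1 ≤ zinf v := by
  by_contra h
  push_neg at h
  apply hv
  funext l
  have h1 : (v l).natAbs ≤ zinf v := by
    unfold zinf; exact Finset.le_sup (f := fun l => (v l).natAbs) (Finset.mem_univ l)
  have : (v l).natAbs = 0 := by omega
  simpa using Int.natAbs_eq_zero.mp this

lemma mem_dcube {k0 v : Fin n → ℤ} {m : ℕ} :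
    v ∈ dcube k0 m ↔ ∀ l, k0 l - m ≤ v l ∧ v l ≤ k0 l + m := by
  simp [dcube, Finset.mem_Icc, Pi.le_def, forall_and]

lemma mem_dcube_zero {v : Fin n → ℤ} {m : ℕ} :
    v ∈ dcube (0 : Fin n → ℤ) m ↔ zinf v ≤ m := by
  rw [mem_dcube]
  have : zinf v ≤ m ↔ ∀ l, (v l).natAbs ≤ m := by
    rw [zinf, Finset.sup_le_iff]
    exact ⟨fun h l => h l (Finset.mem_univ l), fun h l _ => h l⟩
  rw [this]
  constructor
  · intro h l
    have := h l
    simp only [Pi.zero_apply, zero_sub, zero_add] at this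
    omega
  · intro h l
    have := h l
    simp only [Pi.zero_apply, zero_sub, zero_add]
    omega

lemma card_dcube (k0 : Fin n → ℤ) (m : ℕ) : (dcube k0 m).card = (2*m+1)^n := by
  rw [dcube, Pi.card_Icc]
  have h : ∀ l : Fin n, (Finset.Icc (k0 l - m) (k0 l + m)).card = 2*m+1 := by
    intro l; rw [Int.card_Icc]; omega
  simp only [h, Finset.prod_const, Finset.card_univ, Fintype.card_fin]

lemma rpow_step {α : ℝ} (hα0 : 0 < α) (hα1 : α ≤ 1) {x : ℝ} (hx : 1 ≤ x) :
    α * x ^ (α - 1) ≤ x ^ α - (x - 1) ^ α := by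
  have hx0 : 0 < x := lt_of_lt_of_le one_pos hx
  have h1 : (x - 1) ^ α = x ^ α * (1 - 1/x) ^ α := by
    rw [← Real.mul_rpow hx0.le (by
      have : 1/x ≤ 1 := by rw [div_le_one hx0]; exact hx
      linarith)]
    congr 1
    field_simp
  have h2 : (1 - 1/x) ^ α ≤ 1 - α * (1/x) := by
    have hs : (-1 : ℝ) ≤ -(1/x) := by
      have : 1/x ≤ 1 := by rw [div_le_one hx0]; exact hx
      linarith
    have := rpow_one_add_le_one_add_mul_self hs hα0.le hα1
    have e1 : (1 : ℝ) + -(1/x) = 1 - 1/x := by ring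
    have e2 : (1 : ℝ) + α * -(1/x) = 1 - α * (1/x) := by ring
    rw [e1, e2] at this
    exact this
  have h3 : (x - 1) ^ α ≤ x ^ α - α * x ^ (α - 1) := by
    rw [h1]
    have hxa : (0:ℝ) ≤ x ^ α := Real.rpow_nonneg hx0.le α
    calc x ^ α * (1 - 1/x) ^ α ≤ x ^ α * (1 - α * (1/x)) :=
          mul_le_mul_of_nonneg_left h2 hxa
      _ = x ^ α - α * (x ^ α / x) := by ring
      _ = x ^ α - α * x ^ (α - 1) := by rw [← Real.rpow_sub_one hx0.ne' α]
  linarith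

lemma sum_rpow_sub_one_le {α : ℝ} (hα : 0 < α) (T : ℕ) :
    ∑ s ∈ Finset.Icc 1 T, ((s : ℕ) : ℝ) ^ (α - 1) ≤ (1 + 1/α) * ((T : ℕ) : ℝ) ^ α := by
  have hT0 : (0:ℝ) ≤ ((T : ℕ) : ℝ) := Nat.cast_nonneg T
  have hTa : (0:ℝ) ≤ ((T : ℕ) : ℝ) ^ α := Real.rpow_nonneg hT0 α
  rcases le_or_gt α 1 with hα1 | hα1
  · have key : ∀ T : ℕ, ∑ s ∈ Finset.Icc 1 T, ((s : ℕ) : ℝ) ^ (α - 1)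
        ≤ (1/α) * ((T : ℕ) : ℝ) ^ α := by
      intro T
      induction T with
      | zero => simp [Real.zero_rpow hα.ne']
      | succ T ih =>
        rw [Finset.sum_Icc_succ_top (by omega)]
        have hx : (1:ℝ) ≤ ((T : ℕ) : ℝ) + 1 := by
          have : (0:ℝ) ≤ ((T : ℕ) : ℝ) := Nat.cast_nonneg T
          linarith
        have hstep := rpow_step hα hα1 hx
        have hcast : (((T+1 : ℕ)) : ℝ) = ((T : ℕ) : ℝ) + 1 := by push_cast; ring
        have hsub : ((T : ℕ) : ℝ) + 1 - 1 = ((T : ℕ) : ℝ) := by ring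
        rw [hsub] at hstep
        rw [hcast]
        have hmul := mul_le_mul_of_nonneg_left hstep (one_div_pos.mpr hα).le
        have heq : 1/α * (α * (((T : ℕ) : ℝ) + 1)^(α-1)) = (((T : ℕ) : ℝ) + 1)^(α-1) := by
          field_simp
        rw [heq] at hmul
        linarith
    calc ∑ s ∈ Finset.Icc 1 T, ((s : ℕ) : ℝ) ^ (α - 1) ≤ (1/α) * ((T : ℕ) : ℝ) ^ α := key T
      _ ≤ (1 + 1/α) * ((T : ℕ) : ℝ) ^ α := by nlinarith
  · have hbound : ∀ s ∈ Finset.Icc 1 T, ((s : ℕ) : ℝ) ^ (α - 1) ≤ ((T : ℕ) : ℝ) ^ (α - 1) := by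
      intro s hs
      rw [Finset.mem_Icc] at hs
      exact Real.rpow_le_rpow (Nat.cast_nonneg s) (by exact_mod_cast hs.2) (by linarith)
    calc ∑ s ∈ Finset.Icc 1 T, ((s : ℕ) : ℝ) ^ (α - 1)
        ≤ ∑ _s ∈ Finset.Icc 1 T, ((T : ℕ) : ℝ) ^ (α - 1) := Finset.sum_le_sum hbound
      _ = (T : ℝ) * ((T : ℕ) : ℝ) ^ (α - 1) := by
          simp [Finset.sum_const, Nat.card_Icc, nsmul_eq_mul]
      _ ≤ (1 + 1/α) * ((T : ℕ) : ℝ) ^ α := by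
          rcases Nat.eq_zero_or_pos T with rfl | hT
          · simp [Real.zero_rpow hα.ne']
          · have hT1 : (0:ℝ) < (T : ℝ) := by exact_mod_cast hT
            have : (T : ℝ) * ((T : ℕ) : ℝ) ^ (α - 1) = ((T : ℕ) : ℝ) ^ α := by
              rw [Real.rpow_sub_one hT1.ne' α]
              field_simp
            rw [this]
            nlinarith [Real.rpow_nonneg hT0 α, one_div_pos.mpr hα]

lemma nat_pow_sub_le (s : ℕ) (hn : 0 < n) :
    (((2*(s+1)+1)^n - (2*s+1)^n : ℕ) : ℝ) ≤ 2*n*3^(n-1)*((s+1:ℕ):ℝ)^(n-1) := by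
  have hle : (2*s+1)^n ≤ (2*(s+1)+1)^n := Nat.pow_le_pow_left (by omega) n
  rw [Nat.cast_sub hle]
  push_cast
  have e : (2*((s:ℝ)+1)+1) = 2*(s:ℝ)+3 := by ring
  rw [e]
  set a : ℝ := 2*(s:ℝ)+3 with hadef
  set b : ℝ := 2*(s:ℝ)+1 with hbdef
  have hb0 : (0:ℝ) ≤ b := by positivity
  have hba : b ≤ a := by rw [hadef, hbdef]; linarith
  have ha0 : (0:ℝ) ≤ a := le_trans hb0 hba
  have hgeom : a^n - b^n = (∑ i ∈ Finset.range n, a ^ i * b ^ (n - 1 - i)) * (a - b) :=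
    (geom_sum₂_mul a b n).symm
  have hab : a - b = 2 := by rw [hadef, hbdef]; ring
  have hsum : (∑ i ∈ Finset.range n, a ^ i * b ^ (n - 1 - i)) ≤ n * a^(n-1) := by
    calc (∑ i ∈ Finset.range n, a ^ i * b ^ (n - 1 - i))
        ≤ ∑ _i ∈ Finset.range n, a^(n-1) := by
          apply Finset.sum_le_sum
          intro i hi
          rw [Finset.mem_range] at hi
          calc a ^ i * b ^ (n - 1 - i) ≤ a ^ i * a ^ (n - 1 - i) := by
                apply mul_le_mul_of_nonneg_left (pow_le_pow_left₀ hb0 hba _) (by positivity)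
            _ = a ^ (i + (n - 1 - i)) := (pow_add a i (n-1-i)).symm
            _ = a ^ (n-1) := by congr 1; omega
      _ = n * a^(n-1) := by rw [Finset.sum_const, Finset.card_range, nsmul_eq_mul]
  have haa : a ^ (n-1) ≤ (3*((s:ℝ)+1))^(n-1) := by
    apply pow_le_pow_left₀ ha0
    rw [hadef]; linarith
  have h3 : (3*((s:ℝ)+1))^(n-1) = 3^(n-1) * ((s:ℝ)+1)^(n-1) := mul_pow 3 _ (n-1)
  rw [hgeom, hab]
  calc (∑ i ∈ Finset.range n, a ^ i * b ^ (n - 1 - i)) * 2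
      ≤ (n * a^(n-1)) * 2 := by
        apply mul_le_mul_of_nonneg_right hsum (by norm_num)
    _ ≤ (n * (3^(n-1) * ((s:ℝ)+1)^(n-1))) * 2 := by
        apply mul_le_mul_of_nonneg_right _ (by norm_num)
        apply mul_le_mul_of_nonneg_left _ (Nat.cast_nonneg n)
        rw [← h3]; exact haa
    _ = 2*n*3^(n-1)*((s:ℝ)+1)^(n-1) := by ring

lemma card_fiber_le (hn : 0 < n) (T s : ℕ) :
    (((((dcube (0 : Fin n → ℤ) T).erase 0).filter (fun v => zinf v = s + 1)).card : ℕ) : ℝ)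
      ≤ 2*n*3^(n-1)*((s+1:ℕ):ℝ)^(n-1) := by
  classical
  have hsub : (((dcube (0 : Fin n → ℤ) T).erase 0).filter (fun v => zinf v = s + 1))
      ⊆ (dcube (0 : Fin n → ℤ) (s+1)) \ (dcube (0 : Fin n → ℤ) s) := by
    intro v hv
    rw [Finset.mem_filter] at hv
    rw [Finset.mem_sdiff, mem_dcube_zero, mem_dcube_zero]
    omega
  have hsubset : dcube (0 : Fin n → ℤ) s ⊆ dcube (0 : Fin n → ℤ) (s+1) := by
    intro v hv
    rw [mem_dcube_zero] at *
    omega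
  calc (((((dcube (0 : Fin n → ℤ) T).erase 0).filter (fun v => zinf v = s + 1)).card : ℕ) : ℝ)
      ≤ ((((dcube (0 : Fin n → ℤ) (s+1)) \ (dcube (0 : Fin n → ℤ) s)).card : ℕ) : ℝ) := by
        exact_mod_cast Finset.card_le_card hsub
    _ = (((2*(s+1)+1)^n - (2*s+1)^n : ℕ) : ℝ) := by
        rw [Finset.card_sdiff_of_subset hsubset, card_dcube, card_dcube]
    _ ≤ 2*n*3^(n-1)*((s+1:ℕ):ℝ)^(n-1) := nat_pow_sub_le s hn

lemma sum_cube_shells {α : ℝ} (hα : 0 < α) (hαn : α < n) (T : ℕ) :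
    ∑ v ∈ (dcube (0 : Fin n → ℤ) T).erase 0, ((zinf v : ℕ) : ℝ) ^ (α - n)
      ≤ (2*n*3^(n-1) * (1 + 1/α)) * ((T:ℕ):ℝ)^α := by
  classical
  have hn : 0 < n := by
    by_contra h
    push_neg at h
    interval_cases n
    · simp at hαn; linarith
  have hmaps : ∀ v ∈ (dcube (0 : Fin n → ℤ) T).erase 0, zinf v ∈ Finset.Icc 1 T := by
    intro v hv
    rw [Finset.mem_erase] at hv
    rw [Finset.mem_Icc]
    exact ⟨one_le_zinf hv.1, mem_dcube_zero.mp hv.2⟩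
  rw [← Finset.sum_fiberwise_of_maps_to hmaps (fun v => ((zinf v : ℕ) : ℝ) ^ (α - n))]
  have hinner : ∀ s ∈ Finset.Icc 1 T,
      (∑ v ∈ ((dcube (0 : Fin n → ℤ) T).erase 0).filter (fun v => zinf v = s),
        ((zinf v : ℕ) : ℝ) ^ (α - n))
      ≤ (2*n*3^(n-1)) * ((s:ℕ):ℝ)^(α-1) := by
    intro s hs
    rw [Finset.mem_Icc] at hs
    obtain ⟨s', rfl⟩ : ∃ s', s = s' + 1 := ⟨s - 1, by omega⟩
    have hs0 : (0:ℝ) < ((s'+1 : ℕ) : ℝ) := by positivity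
    have heq : ∀ v ∈ ((dcube (0 : Fin n → ℤ) T).erase 0).filter (fun v => zinf v = s'+1),
        ((zinf v : ℕ) : ℝ) ^ (α - n) = ((s'+1:ℕ):ℝ) ^ (α - n) := by
      intro v hv
      rw [Finset.mem_filter] at hv
      rw [hv.2]
    rw [Finset.sum_congr rfl heq, Finset.sum_const, nsmul_eq_mul]
    have hrn : (0:ℝ) ≤ ((s'+1:ℕ):ℝ) ^ (α - n) := Real.rpow_nonneg hs0.le _
    calc (((((dcube (0 : Fin n → ℤ) T).erase 0).filter (fun v => zinf v = s'+1)).card : ℕ) : ℝ)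
          * ((s'+1:ℕ):ℝ) ^ (α - n)
        ≤ (2*n*3^(n-1)*((s'+1:ℕ):ℝ)^(n-1)) * ((s'+1:ℕ):ℝ) ^ (α - n) :=
          mul_le_mul_of_nonneg_right (card_fiber_le hn T s') hrn
      _ = (2*n*3^(n-1)) * (((s'+1:ℕ):ℝ)^(n-1) * ((s'+1:ℕ):ℝ) ^ (α - n)) := by ring
      _ = (2*n*3^(n-1)) * ((s'+1:ℕ):ℝ)^(α-1) := by
          congr 1
          rw [← Real.rpow_natCast ((s'+1:ℕ):ℝ) (n-1), ← Real.rpow_add hs0]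
          congr 1
          have : ((n-1 : ℕ) : ℝ) = (n:ℝ) - 1 := by
            have : 1 ≤ n := hn
            push_cast [this]; ring
          rw [this]; ring
  calc (∑ s ∈ Finset.Icc 1 T,
        ∑ v ∈ ((dcube (0 : Fin n → ℤ) T).erase 0).filter (fun v => zinf v = s),
          ((zinf v : ℕ) : ℝ) ^ (α - n))
      ≤ ∑ s ∈ Finset.Icc 1 T, (2*n*3^(n-1)) * ((s:ℕ):ℝ)^(α-1) := Finset.sum_le_sum hinner
    _ = (2*n*3^(n-1)) * ∑ s ∈ Finset.Icc 1 T, ((s:ℕ):ℝ)^(α-1) := by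
        rw [Finset.mul_sum]
    _ ≤ (2*n*3^(n-1)) * ((1 + 1/α) * ((T:ℕ):ℝ)^α) := by
        apply mul_le_mul_of_nonneg_left (sum_rpow_sub_one_le hα T)
        positivity
    _ = (2*n*3^(n-1) * (1 + 1/α)) * ((T:ℕ):ℝ)^α := by ring

lemma sum_translated_cube {α : ℝ} (hα : 0 < α) (hαn : α < n) (c : Fin n → ℤ) (m : ℕ) :
    ∑ v ∈ (dcube c m).erase 0, ((zinf v : ℕ) : ℝ) ^ (α - n)
      ≤ (2*n*3^(n-1)*(1+1/α) + 1) * ((2*m+1 : ℕ) : ℝ)^α := by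
  classical
  set T : ℕ := 2*m+1 with hT
  have hT1 : 1 ≤ T := by omega
  have hT0 : (0:ℝ) < ((T:ℕ):ℝ) := by positivity
  rw [← Finset.sum_filter_add_sum_filter_not ((dcube c m).erase 0) (fun v => zinf v ≤ T)]
  have h1 : ∑ v ∈ ((dcube c m).erase 0).filter (fun v => zinf v ≤ T),
      ((zinf v : ℕ) : ℝ) ^ (α - n)
      ≤ (2*n*3^(n-1) * (1 + 1/α)) * ((T:ℕ):ℝ)^α := by
    refine le_trans (Finset.sum_le_sum_of_subset_of_nonneg ?_ ?_) (sum_cube_shells hα hαn T)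
    · intro v hv
      rw [Finset.mem_filter, Finset.mem_erase] at hv
      rw [Finset.mem_erase, mem_dcube_zero]
      exact ⟨hv.1.1, hv.2⟩
    · intro v _ _
      exact Real.rpow_nonneg (Nat.cast_nonneg _) _
  have h2 : ∑ v ∈ ((dcube c m).erase 0).filter (fun v => ¬ zinf v ≤ T),
      ((zinf v : ℕ) : ℝ) ^ (α - n) ≤ ((T:ℕ):ℝ)^α := by
    have hterm : ∀ v ∈ ((dcube c m).erase 0).filter (fun v => ¬ zinf v ≤ T),
        ((zinf v : ℕ) : ℝ) ^ (α - n) ≤ ((T:ℕ):ℝ) ^ (α - (n:ℝ)) := by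
      intro v hv
      rw [Finset.mem_filter] at hv
      apply Real.rpow_le_rpow_of_nonpos hT0
      · exact_mod_cast Nat.le_of_lt (by omega : T < zinf v)
      · linarith
    calc ∑ v ∈ ((dcube c m).erase 0).filter (fun v => ¬ zinf v ≤ T),
          ((zinf v : ℕ) : ℝ) ^ (α - n)
        ≤ ∑ _v ∈ ((dcube c m).erase 0).filter (fun v => ¬ zinf v ≤ T),
          ((T:ℕ):ℝ) ^ (α - (n:ℝ)) := Finset.sum_le_sum hterm
      _ = ((((dcube c m).erase 0).filter (fun v => ¬ zinf v ≤ T)).card : ℝ)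
            * ((T:ℕ):ℝ) ^ (α - (n:ℝ)) := by rw [Finset.sum_const, nsmul_eq_mul]
      _ ≤ ((T:ℕ):ℝ)^(n:ℕ) * ((T:ℕ):ℝ) ^ (α - (n:ℝ)) := by
          apply mul_le_mul_of_nonneg_right _ (Real.rpow_nonneg hT0.le _)
          have hcard : (((dcube c m).erase 0).filter (fun v => ¬ zinf v ≤ T)).card
              ≤ T^n := by
            calc (((dcube c m).erase 0).filter (fun v => ¬ zinf v ≤ T)).card
                ≤ (dcube c m).card := Finset.card_le_card
                  (le_trans (Finset.filter_subset _ _) (Finset.erase_subset _ _))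
              _ = T^n := card_dcube c m
          calc ((((dcube c m).erase 0).filter (fun v => ¬ zinf v ≤ T)).card : ℝ)
              ≤ ((T^n : ℕ) : ℝ) := by exact_mod_cast hcard
            _ = ((T:ℕ):ℝ)^(n:ℕ) := by push_cast; ring
      _ = ((T:ℕ):ℝ)^α := by
          rw [← Real.rpow_natCast ((T:ℕ):ℝ) n, ← Real.rpow_add hT0]
          congr 1
          ring
  have hTa : (0:ℝ) ≤ ((T:ℕ):ℝ)^α := Real.rpow_nonneg hT0.le α
  have : (2*(n:ℝ)*3^(n-1) * (1 + 1/α)) * ((T:ℕ):ℝ)^α + ((T:ℕ):ℝ)^α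
      = (2*n*3^(n-1)*(1+1/α) + 1) * ((T:ℕ):ℝ)^α := by ring
  linarith [h1, h2]

lemma abs_rieszPot_le {α : ℝ} (hα : 0 < α) (hαn : α < n) {p : ℝ} (hp : 0 < p)
    (k0 : Fin n → ℤ) (m : ℕ) (a : (Fin n → ℤ) → ℝ)
    (ha0 : ∀ j, j ∉ dcube k0 m → a j = 0)
    (ha1 : ∀ j, |a j| ≤ ((dcube k0 m).card : ℝ) ^ (-(1 / p)))
    (j : Fin n → ℤ) :
    |rieszPot α a j| ≤ (2*n*3^(n-1)*(1+1/α) + 1) *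
      ((dcube k0 m).card : ℝ) ^ (α / (n:ℝ) - 1 / p) := by
  classical
  have hn0 : (0:ℝ) < (n:ℝ) := lt_trans hα hαn
  set Q := dcube k0 m with hQ
  set Cn : ℝ := 2*n*3^(n-1)*(1+1/α) + 1 with hCn
  have hone : (0:ℝ) < 1 + 1/α := by
    have := one_div_pos.mpr hα
    linarith
  have hCn0 : 0 < Cn := by
    have h1 : (0:ℝ) ≤ 2*(n:ℝ)*3^(n-1) := by positivity
    have h2 : (0:ℝ) ≤ 2*(n:ℝ)*3^(n-1)*(1+1/α) := mul_nonneg h1 hone.le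
    rw [hCn]
    linarith
  have hQcard : Q.card = (2*m+1)^n := card_dcube k0 m
  have hQpos : (0:ℝ) < (Q.card:ℝ) := by
    rw [hQcard]; positivity
  have hsum : rieszPot α a j = ∑ i ∈ Q.subtype (· ≠ j),
      a i.1 * znorm (i.1 - j) ^ (α - (n:ℝ)) := by
    unfold rieszPot
    apply tsum_eq_sum
    intro i hi
    have hiQ : (i : Fin n → ℤ) ∉ Q := fun h => hi (Finset.mem_subtype.mpr h)
    rw [ha0 _ hiQ, zero_mul]
  have hterm : ∀ i ∈ Q.subtype (· ≠ j),
      |a i.1 * znorm (i.1 - j) ^ (α - (n:ℝ))|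
        ≤ (Q.card:ℝ)^(-(1/p)) * ((zinf (i.1 - j) : ℕ) : ℝ) ^ (α - (n:ℝ)) := by
    intro i hi
    have hne : i.1 - j ≠ 0 := sub_ne_zero_of_ne i.2
    have h1 : 1 ≤ zinf (i.1 - j) := one_le_zinf hne
    have hz0 : (0:ℝ) < ((zinf (i.1 - j):ℕ):ℝ) := by
      have : 0 < zinf (i.1 - j) := h1
      exact_mod_cast this
    rw [abs_mul, abs_of_nonneg (Real.rpow_nonneg (znorm_nonneg _) _)]
    exact mul_le_mul (ha1 _)
      (Real.rpow_le_rpow_of_nonpos hz0 (zinf_le_znorm _) (by linarith))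
      (Real.rpow_nonneg (znorm_nonneg _) _)
      (Real.rpow_nonneg hQpos.le _)
  have hsub : ∑ i ∈ Q.subtype (· ≠ j), ((zinf (i.1 - j):ℕ):ℝ)^(α-(n:ℝ))
      = ∑ v ∈ Q.erase j, ((zinf (v - j):ℕ):ℝ)^(α-(n:ℝ)) := by
    rw [Finset.sum_subtype_eq_sum_filter (fun v => ((zinf (v - j):ℕ):ℝ)^(α-(n:ℝ)))
      (p := (· ≠ j)) (s := Q)]
    congr 1
    exact Finset.filter_ne' Q j
  have htrans : ∑ v ∈ Q.erase j, ((zinf (v - j):ℕ):ℝ)^(α-(n:ℝ))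
      = ∑ w ∈ (dcube (fun l => k0 l - j l) m).erase 0, ((zinf w:ℕ):ℝ)^(α-(n:ℝ)) := by
    refine Finset.sum_nbij' (fun v => v - j) (fun w => w + j) ?_ ?_ ?_ ?_ ?_
    · intro v hv
      rw [Finset.mem_erase, hQ, mem_dcube] at hv
      rw [Finset.mem_erase, mem_dcube]
      refine ⟨sub_ne_zero_of_ne hv.1, fun l => ?_⟩
      have := hv.2 l
      simp only [Pi.sub_apply]
      omega
    · intro w hw
      rw [Finset.mem_erase, mem_dcube] at hw
      rw [Finset.mem_erase, hQ, mem_dcube]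
      constructor
      · intro hcon
        apply hw.1
        funext l
        have := congrFun hcon l
        simp only [Pi.add_apply, Pi.zero_apply] at this ⊢
        omega
      · intro l
        have := hw.2 l
        simp only [Pi.add_apply]
        omega
    · intro v _
      funext l
      simp
    · intro w _
      funext l
      simp
    · intro v _
      rfl
  have hmain := sum_translated_cube hα hαn (fun l => k0 l - j l) m
  have habs : |rieszPot α a j|
      ≤ (Q.card:ℝ)^(-(1/p)) * (Cn * ((2*m+1:ℕ):ℝ)^α) := by
    rw [hsum]
    calc |∑ i ∈ Q.subtype (· ≠ j), a i.1 * znorm (i.1 - j) ^ (α - (n:ℝ))|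
        ≤ ∑ i ∈ Q.subtype (· ≠ j), |a i.1 * znorm (i.1 - j) ^ (α - (n:ℝ))| :=
          Finset.abs_sum_le_sum_abs _ _
      _ ≤ ∑ i ∈ Q.subtype (· ≠ j),
            (Q.card:ℝ)^(-(1/p)) * ((zinf (i.1 - j):ℕ):ℝ)^(α-(n:ℝ)) :=
          Finset.sum_le_sum hterm
      _ = (Q.card:ℝ)^(-(1/p)) *
            ∑ i ∈ Q.subtype (· ≠ j), ((zinf (i.1 - j):ℕ):ℝ)^(α-(n:ℝ)) := by
          rw [Finset.mul_sum]
      _ ≤ (Q.card:ℝ)^(-(1/p)) * (Cn * ((2*m+1:ℕ):ℝ)^α) := by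
          apply mul_le_mul_of_nonneg_left _ (Real.rpow_nonneg hQpos.le _)
          rw [hsub, htrans]
          exact hmain
  have hpow : ((2*m+1:ℕ):ℝ)^α = ((Q.card:ℕ):ℝ)^(α/(n:ℝ)) := by
    rw [hQcard]
    push_cast
    have hx : (0:ℝ) ≤ 2*(m:ℝ)+1 := by positivity
    rw [← Real.rpow_natCast (2*(m:ℝ)+1) n, ← Real.rpow_mul hx]
    congr 1
    field_simp
  have hfinal : (Q.card:ℝ)^(-(1/p)) * (Cn * ((Q.card:ℝ))^(α/(n:ℝ)))
      = Cn * (Q.card:ℝ)^(α/(n:ℝ) - 1/p) := by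
    rw [show α/(n:ℝ) - 1/p = -(1/p) + α/(n:ℝ) by ring, Real.rpow_add hQpos]
    ring
  rw [hpow] at habs
  rw [hfinal] at habs
  exact habs

lemma maxFn_le_of_bounded (Φ : SchwartzMap (EuclideanSpace ℝ (Fin n)) ℝ)
    (hΦ : Function.support (⇑Φ) ⊆ Metric.ball 0 (1 / 4))
    {b : (Fin n → ℤ) → ℝ} {K : ℝ} (hK : 0 ≤ K) (hb : ∀ k, |b k| ≤ K) (j : Fin n → ℤ) :
    maxFn Φ b j ≤ ENNReal.ofReal ((SchwartzMap.seminorm ℝ 0 0 Φ : ℝ) * K) := by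
  classical
  have hΦle : ∀ x, |Φ x| ≤ (SchwartzMap.seminorm ℝ 0 0 Φ : ℝ) := by
    intro x
    have h := SchwartzMap.le_seminorm ℝ 0 0 Φ x
    simpa [norm_iteratedFDeriv_zero, Real.norm_eq_abs] using h
  have hA0 : 0 ≤ (SchwartzMap.seminorm ℝ 0 0 Φ : ℝ) := le_trans (abs_nonneg _) (hΦle 0)
  rw [maxFn]
  refine iSup_le fun t => iSup_le fun ht => ?_
  apply ENNReal.ofReal_le_ofReal
  set s₀ : ℕ := ⌊t/4⌋₊ with hs₀
  have hout : ∀ i : Fin n → ℤ, i ∉ dcube (0 : Fin n → ℤ) s₀ →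
      phid Φ t i * b (j - i) = 0 := by
    intro i hi
    have hphi : phid Φ t i = 0 := by
      unfold phid
      split_ifs with h
      · rfl
      · have hΦ0 : Φ (t⁻¹ • toE i) = 0 := by
          by_contra hne
          have hmem : t⁻¹ • toE i ∈ Metric.ball (0 : EuclideanSpace ℝ (Fin n)) (1/4) :=
            hΦ (Function.mem_support.mpr hne)
          rw [Metric.mem_ball, dist_zero_right] at hmem
          have hnorm : ‖toE i‖ = znorm i := by
            rw [EuclideanSpace.norm_eq]
            unfold znorm toE
            congr 1
            apply Finset.sum_congr rfl
            intro l _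
            rw [Real.norm_eq_abs, sq_abs]
          rw [norm_smul, Real.norm_eq_abs, abs_inv, abs_of_pos ht, hnorm] at hmem
          have hzn : znorm i < t/4 := by
            have h' := mul_lt_mul_of_pos_left hmem ht
            rw [← mul_assoc, mul_inv_cancel₀ ht.ne', one_mul] at h'
            linarith
          have hle : ((zinf i : ℕ):ℝ) ≤ t/4 := le_trans (zinf_le_znorm i) hzn.le
          have hfloor : zinf i ≤ s₀ := Nat.le_floor hle
          exact hi (mem_dcube_zero.mpr hfloor)
        rw [hΦ0, mul_zero]
    rw [hphi, zero_mul]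
  have hd : dconv (phid Φ t) b j
      = ∑ i ∈ dcube (0 : Fin n → ℤ) s₀, phid Φ t i * b (j - i) := by
    unfold dconv
    exact tsum_eq_sum hout
  have h0mem : (0 : Fin n → ℤ) ∈ dcube (0 : Fin n → ℤ) s₀ := by
    apply mem_dcube_zero.mpr
    have hz : zinf (0 : Fin n → ℤ) = 0 := by simp [zinf]
    omega
  have h0 : phid Φ t 0 * b (j - 0) = 0 := by unfold phid; simp
  have herase : ∑ i ∈ dcube (0 : Fin n → ℤ) s₀, phid Φ t i * b (j - i)
      = ∑ i ∈ (dcube (0 : Fin n → ℤ) s₀).erase 0, phid Φ t i * b (j - i) :=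
    (Finset.sum_erase (f := fun i => phid Φ t i * b (j - i)) _ h0).symm
  rw [hd, herase]
  have hterm : ∀ i ∈ (dcube (0 : Fin n → ℤ) s₀).erase 0,
      |phid Φ t i * b (j - i)| ≤ t ^ (-(n:ℝ)) * (SchwartzMap.seminorm ℝ 0 0 Φ : ℝ) * K := by
    intro i hi
    rw [Finset.mem_erase] at hi
    unfold phid
    rw [if_neg hi.1, abs_mul, abs_mul, abs_of_pos (Real.rpow_pos_of_pos ht _)]
    exact mul_le_mul
      (mul_le_mul_of_nonneg_left (hΦle _) (Real.rpow_nonneg ht.le _))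
      (hb _) (abs_nonneg _)
      (mul_nonneg (Real.rpow_nonneg ht.le _) hA0)
  have hcardbound : (((dcube (0 : Fin n → ℤ) s₀).erase 0).card : ℝ) ≤ t ^ ((n:ℕ):ℝ) := by
    rw [Finset.card_erase_of_mem h0mem, card_dcube]
    rcases lt_or_ge t 2 with h2 | h2
    · have hz : s₀ = 0 := by
        rw [hs₀]
        apply Nat.floor_eq_zero.mpr
        linarith
      rw [hz]
      norm_num
      positivity
    · have hs4 : (s₀:ℝ) ≤ t/4 := Nat.floor_le (by positivity)
      have hle : ((2*s₀+1:ℕ):ℝ) ≤ t := by push_cast; linarith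
      calc (((2*s₀+1)^n - 1 : ℕ):ℝ) ≤ (((2*s₀+1)^n : ℕ):ℝ) := by
            exact_mod_cast Nat.sub_le _ _
        _ = ((2*s₀+1:ℕ):ℝ)^n := by push_cast; ring
        _ ≤ t^(n:ℕ) := pow_le_pow_left₀ (by positivity) hle n
        _ = t^((n:ℕ):ℝ) := (Real.rpow_natCast t n).symm
  calc |∑ i ∈ (dcube (0 : Fin n → ℤ) s₀).erase 0, phid Φ t i * b (j - i)|
      ≤ ∑ i ∈ (dcube (0 : Fin n → ℤ) s₀).erase 0, |phid Φ t i * b (j - i)| :=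
        Finset.abs_sum_le_sum_abs _ _
    _ ≤ ∑ _i ∈ (dcube (0 : Fin n → ℤ) s₀).erase 0,
          t ^ (-(n:ℝ)) * (SchwartzMap.seminorm ℝ 0 0 Φ : ℝ) * K :=
        Finset.sum_le_sum hterm
    _ = (((dcube (0 : Fin n → ℤ) s₀).erase 0).card : ℝ)
          * (t ^ (-(n:ℝ)) * (SchwartzMap.seminorm ℝ 0 0 Φ : ℝ) * K) := by
        rw [Finset.sum_const, nsmul_eq_mul]
    _ ≤ t^((n:ℕ):ℝ) * (t ^ (-(n:ℝ)) * (SchwartzMap.seminorm ℝ 0 0 Φ : ℝ) * K) := by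
        exact mul_le_mul_of_nonneg_right hcardbound
          (mul_nonneg (mul_nonneg (Real.rpow_nonneg ht.le _) hA0) hK)
    _ = (SchwartzMap.seminorm ℝ 0 0 Φ : ℝ) * K := by
        rw [show t ^ ((n:ℕ):ℝ) * (t ^ (-(n:ℝ)) * (SchwartzMap.seminorm ℝ 0 0 Φ : ℝ) * K)
            = (t ^ ((n:ℕ):ℝ) * t ^ (-(n:ℝ))) * ((SchwartzMap.seminorm ℝ 0 0 Φ : ℝ) * K)
          from by ring, ← Real.rpow_add ht]
        have he : ((n:ℕ):ℝ) + -(n:ℝ) = 0 := by ring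
        rw [he, Real.rpow_zero, one_mul]

end AuxLemmas

/-- `sup_{t>0} |(Φ_t^d ∗ I_α a)(j)| ≤ C (#Q)^{α/n - 1/p}` for sequences `a`
supported in a discrete cube `Q` with `‖a‖_∞ ≤ (#Q)^{-1/p}`. -/
theorem stmt3 (n : ℕ) (α : ℝ) (hα : 0 < α) (hαn : α < n)
    (Φ : SchwartzMap (EuclideanSpace ℝ (Fin n)) ℝ)
    (hΦ : Function.support (⇑Φ) ⊆ Metric.ball 0 (1 / 4)) :
    ∃ C > (0 : ℝ), ∀ (p : ℝ), 0 < p → p ≤ 1 →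
      ∀ (k0 : Fin n → ℤ) (m : ℕ) (a : (Fin n → ℤ) → ℝ),
        (∀ j, j ∉ dcube k0 m → a j = 0) →
        (∀ j, |a j| ≤ ((dcube k0 m).card : ℝ) ^ (-(1 / p))) →
        ∀ j : Fin n → ℤ,
          maxFn Φ (rieszPot α a) j
            ≤ ENNReal.ofReal (C * ((dcube k0 m).card : ℝ) ^ (α / n - 1 / p)) := by
  classical
  have hone : (0:ℝ) < 1 + 1/α := by
    have := one_div_pos.mpr hα
    linarith
  have hA0 : 0 ≤ (SchwartzMap.seminorm ℝ 0 0 Φ : ℝ) := by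
    have h := SchwartzMap.le_seminorm ℝ 0 0 Φ 0
    have h2 : (0:ℝ) ≤ ‖(0 : EuclideanSpace ℝ (Fin n))‖ ^ (0:ℕ) * ‖iteratedFDeriv ℝ 0 (⇑Φ) 0‖ := by
      positivity
    linarith
  have hCn0 : (0:ℝ) < 2*n*3^(n-1)*(1+1/α) + 1 := by
    have h1 : (0:ℝ) ≤ 2*n*3^(n-1) := by positivity
    nlinarith
  refine ⟨((SchwartzMap.seminorm ℝ 0 0 Φ : ℝ) + 1) * (2*n*3^(n-1)*(1+1/α) + 1),
    by nlinarith, ?_⟩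
  intro p hp hp1 k0 m a ha0 ha1 j
  have hX0 : (0:ℝ) ≤ ((dcube k0 m).card : ℝ) ^ (α / (n:ℝ) - 1 / p) :=
    Real.rpow_nonneg (Nat.cast_nonneg _) _
  have hb : ∀ k, |rieszPot α a k| ≤ (2*n*3^(n-1)*(1+1/α) + 1) *
      ((dcube k0 m).card : ℝ) ^ (α / (n:ℝ) - 1 / p) :=
    fun k => abs_rieszPot_le hα hαn hp k0 m a ha0 ha1 k
  have hK0 : 0 ≤ (2*n*3^(n-1)*(1+1/α) + 1) *
      ((dcube k0 m).card : ℝ) ^ (α / (n:ℝ) - 1 / p) := mul_nonneg hCn0.le hX0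
  refine le_trans (maxFn_le_of_bounded Φ hΦ hK0 hb j) (ENNReal.ofReal_le_ofReal ?_)
  calc (SchwartzMap.seminorm ℝ 0 0 Φ : ℝ) * ((2*n*3^(n-1)*(1+1/α) + 1) *
        ((dcube k0 m).card : ℝ) ^ (α / (n:ℝ) - 1 / p))
      = ((SchwartzMap.seminorm ℝ 0 0 Φ : ℝ) * (2*n*3^(n-1)*(1+1/α) + 1)) *
        ((dcube k0 m).card : ℝ) ^ (α / (n:ℝ) - 1 / p) := by ring
    _ ≤ (((SchwartzMap.seminorm ℝ 0 0 Φ : ℝ) + 1) * (2*n*3^(n-1)*(1+1/α) + 1)) *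
        ((dcube k0 m).card : ℝ) ^ (α / (n:ℝ) - 1 / p) := by
        apply mul_le_mul_of_nonneg_right _ hX0
        nlinarith
end
end

section
/- Let 0 < α < n, N ∈ ℕ, and let q_N(·,k) be the degree N−1 Taylor polynomial of x ↦ |k−x|^{α−n} around k⁰ ∈ ℤⁿ. Then for all i, k ∈ ℤⁿ with |k−k⁰|_∞ ≥ 2|i−k⁰|_∞ > 0, one has | |i−k|^{α−n} − q_N(i,k) | ≤ C |i−k⁰|_∞^N |k−k⁰|_∞^{α−n−N}, with C independent of i, k, k⁰. -/
open scoped BigOperators ENNReal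

noncomputable section

variable {E F : Type*} [NormedAddCommGroup E] [NormedSpace ℝ E]
  [NormedAddCommGroup F] [NormedSpace ℝ F]

lemma fderiv_comp_const_add' (g : E → F) (a x : E) :
    fderiv ℝ (fun y => g (a + y)) x = fderiv ℝ g (a + x) := by
  by_cases hg : DifferentiableAt ℝ g (a + x)
  · have h1 : HasFDerivAt (fun y : E => a + y) (ContinuousLinearMap.id ℝ E) x := by
      simpa using (hasFDerivAt_id x).const_add a
    have h2 := hg.hasFDerivAt.comp x h1
    simp only [ContinuousLinearMap.comp_id] at h2
    exact h2.fderiv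
  · have hg' : ¬ DifferentiableAt ℝ (fun y => g (a + y)) x := by
      intro hcomp
      have h2 : DifferentiableAt ℝ ((fun y => g (a + y)) ∘ fun z : E => z - a) (a + x) := by
        have hin : DifferentiableAt ℝ (fun z : E => z - a) (a + x) :=
          (differentiableAt_id (𝕜 := ℝ) (x := a + x)).sub_const a
        have := DifferentiableAt.comp (𝕜 := ℝ) (a + x) (by simpa using hcomp) hin
        exact this
      have h3 : ((fun y => g (a + y)) ∘ fun z : E => z - a) = g := by
        funext z; simp
      rw [h3] at h2
      exact hg h2
    rw [fderiv_zero_of_not_differentiableAt hg, fderiv_zero_of_not_differentiableAt hg']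

lemma iteratedFDeriv_comp_const_add' (a : E) (g : E → F) :
    ∀ (r : ℕ) (x : E), iteratedFDeriv ℝ r (fun y => g (a + y)) x = iteratedFDeriv ℝ r g (a + x)
  | 0, x => by ext m; simp
  | (r+1), x => by
    ext m
    rw [iteratedFDeriv_succ_apply_left, iteratedFDeriv_succ_apply_left]
    have hfun : iteratedFDeriv ℝ r (fun y => g (a + y))
        = fun y => iteratedFDeriv ℝ r g (a + y) :=
      funext fun y => iteratedFDeriv_comp_const_add' a g r y
    rw [hfun, fderiv_comp_const_add' (iteratedFDeriv ℝ r g) a x]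

lemma iteratedFDerivWithin_subset_open {g : E → F} {s U : Set E} {m : ℕ}
    (hU : IsOpen U) (hsU : s ⊆ U) (hs : UniqueDiffOn ℝ s)
    (hg : ContDiffOn ℝ m g U) {x : E} (hx : x ∈ s) :
    iteratedFDerivWithin ℝ m g s x = iteratedFDeriv ℝ m g x := by
  have h1 := ((hg.ftaylorSeriesWithin hU.uniqueDiffOn).mono hsU).eq_iteratedFDerivWithin_of_uniqueDiffOn
    (le_refl (m : WithTop ℕ∞)) hs hx
  have h2 : ftaylorSeriesWithin ℝ g U x m = iteratedFDerivWithin ℝ m g U x := rfl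
  rw [← h1, h2, iteratedFDerivWithin_of_isOpen m hU (hsU hx)]

lemma normDerivBound (n : ℕ) (s : ℝ) (r : ℕ) :
    ∃ M : ℝ, 1 ≤ M ∧ ∀ u : EuclideanSpace ℝ (Fin n), u ≠ 0 →
      ‖iteratedFDeriv ℝ r (fun y : EuclideanSpace ℝ (Fin n) => ‖y‖ ^ s) u‖
        ≤ M * ‖u‖ ^ (s - r) := by
  set E := EuclideanSpace ℝ (Fin n)
  set h : E → ℝ := fun y => ‖y‖ ^ s with hh
  set O : Set E := ({0} : Set E)ᶜ with hO'
  have hO : IsOpen O := isOpen_compl_singleton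
  have hmemO : ∀ y : E, y ∈ O ↔ y ≠ 0 := fun y => Set.mem_compl_singleton_iff
  have hcd : ContDiffOn ℝ r h O := by
    intro y hy
    have hy0 : y ≠ 0 := (hmemO y).1 hy
    exact ((contDiffAt_norm ℝ hy0).rpow_const_of_ne (norm_ne_zero_iff.mpr hy0)).contDiffWithinAt
  have hcont : ContinuousOn (iteratedFDeriv ℝ r h) O :=
    (hcd.continuousOn_iteratedFDerivWithin (le_refl _) hO.uniqueDiffOn).congr
      (iteratedFDerivWithin_of_isOpen r hO).symm
  have hsub : Metric.sphere (0 : E) 1 ⊆ O := by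
    intro y hy
    rw [mem_sphere_zero_iff_norm] at hy
    exact (hmemO y).2 (by intro hy0; rw [hy0] at hy; simp at hy)
  obtain ⟨M0, hM0⟩ := (isCompact_sphere (0 : E) 1).exists_bound_of_continuousOn
    (hcont.mono hsub)
  refine ⟨max M0 1, le_max_right _ _, ?_⟩
  intro u hu
  set c : ℝ := ‖u‖ with hc'
  have hc : 0 < c := norm_pos_iff.mpr hu
  set y0 : E := c⁻¹ • u with hy0'
  have hy0 : ‖y0‖ = 1 := by
    rw [hy0', norm_smul, norm_inv, norm_norm]; exact inv_mul_cancel₀ hc.ne'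
  have hy0ne : y0 ≠ 0 := by intro hz; rw [hz] at hy0; simp at hy0
  set g : E →L[ℝ] E := c • ContinuousLinearMap.id ℝ E with hg'
  have hgapp : ∀ y : E, g y = c • y := fun y => rfl
  have hgy0 : g y0 = u := by rw [hgapp, hy0', smul_inv_smul₀ hc.ne']
  have hpre : IsOpen (g ⁻¹' O) := hO.preimage g.continuous
  have hy0pre : y0 ∈ g ⁻¹' O := by
    simp only [Set.mem_preimage, hgy0]; exact (hmemO u).2 hu
  -- key1 : comp right
  have key1 : iteratedFDeriv ℝ r (h ∘ g) y0 =
      (iteratedFDeriv ℝ r h u).compContinuousLinearMap fun _ => g := by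
    have := g.iteratedFDerivWithin_comp_right hcd hO.uniqueDiffOn hpre.uniqueDiffOn
      (x := y0) (by rw [hgy0]; exact (hmemO u).2 hu) (le_refl (r : WithTop ℕ∞))
    rw [iteratedFDerivWithin_of_isOpen r hpre hy0pre,
      iteratedFDerivWithin_of_isOpen r hO (by rw [hgy0] at *; exact (hmemO u).2 hu)] at this
    rw [← hgy0]; rw [hgy0] at this ⊢; exact this
  -- key2 : scaling of the function
  have hcomp : h ∘ g = fun y => (c ^ s) • h y := by
    funext y
    simp only [Function.comp_apply, hgapp, hh, smul_eq_mul]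
    rw [norm_smul, Real.norm_eq_abs, abs_of_pos hc, Real.mul_rpow hc.le (norm_nonneg y)]
  have hy0O : y0 ∈ O := (hmemO y0).2 hy0ne
  have key2 : iteratedFDeriv ℝ r (h ∘ g) y0 = (c ^ s) • iteratedFDeriv ℝ r h y0 := by
    rw [hcomp]
    have : iteratedFDerivWithin ℝ r ((c ^ s) • h) O y0
        = (c ^ s) • iteratedFDerivWithin ℝ r h O y0 :=
      iteratedFDerivWithin_const_smul_apply (hcd y0 hy0O) hO.uniqueDiffOn hy0O
    have heq : (fun y => (c ^ s) • h y) = (c ^ s) • h := rfl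
    rw [heq, ← iteratedFDerivWithin_of_isOpen r hO hy0O, this,
      iteratedFDerivWithin_of_isOpen r hO hy0O]
  have key3 : iteratedFDeriv ℝ r h u
      = (c ^ s * (c⁻¹) ^ r) • iteratedFDeriv ℝ r h y0 := by
    ext m
    have h5 := congrArg (fun (T : ContinuousMultilinearMap ℝ (fun _ : Fin r => E) ℝ) =>
      T (fun l => c⁻¹ • m l)) (key1.symm.trans key2)
    simp only [ContinuousMultilinearMap.compContinuousLinearMap_apply,
      ContinuousMultilinearMap.smul_apply, hgapp] at h5
    have h6 : (fun l => c • c⁻¹ • m l) = m := by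
      funext l; rw [smul_inv_smul₀ hc.ne']
    rw [h6] at h5
    have h7 := (iteratedFDeriv ℝ r h y0).map_smul_univ (fun _ => c⁻¹) m
    simp only [Finset.prod_const, Finset.card_univ, Fintype.card_fin] at h7
    rw [h7, smul_smul] at h5
    simpa using h5
  have hnorm : ‖iteratedFDeriv ℝ r h y0‖ ≤ M0 :=
    hM0 y0 (by rwa [mem_sphere_zero_iff_norm])
  have hpowpos : 0 < c ^ s * (c⁻¹) ^ r := by positivity
  have hpoweq : c ^ s * (c⁻¹) ^ r = c ^ (s - r) := by
    rw [inv_pow, ← Real.rpow_natCast c r, ← Real.rpow_neg hc.le, ← Real.rpow_add hc,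
      ← sub_eq_add_neg]
  calc ‖iteratedFDeriv ℝ r h u‖ = |c ^ s * (c⁻¹) ^ r| * ‖iteratedFDeriv ℝ r h y0‖ := by
        rw [key3, norm_smul, Real.norm_eq_abs]
    _ ≤ (c ^ s * (c⁻¹) ^ r) * max M0 1 := by
        rw [abs_of_pos hpowpos]
        exact mul_le_mul_of_nonneg_left (hnorm.trans (le_max_left _ _)) hpowpos.le
    _ = max M0 1 * c ^ (s - r) := by rw [hpoweq]; ring

lemma abs_coord_le {n : ℕ} (x : EuclideanSpace ℝ (Fin n)) (l : Fin n) : |x l| ≤ ‖x‖ := by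
  rw [EuclideanSpace.norm_eq]
  have h1 : |x l| = Real.sqrt (‖x l‖ ^ 2) := by
    rw [Real.norm_eq_abs, Real.sqrt_sq_eq_abs, abs_abs]
  rw [h1]
  apply Real.sqrt_le_sqrt
  exact Finset.single_le_sum (f := fun i => ‖x i‖ ^ 2) (fun i _ => by positivity)
    (Finset.mem_univ l)

lemma norm_le_sqrt_mul {n : ℕ} (x : EuclideanSpace ℝ (Fin n)) (B : ℝ) (hB : 0 ≤ B)
    (hx : ∀ l, |x l| ≤ B) : ‖x‖ ≤ Real.sqrt n * B := by
  rw [EuclideanSpace.norm_eq]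
  have h1 : ∑ i, ‖x i‖ ^ 2 ≤ n * B ^ 2 := by
    calc ∑ i, ‖x i‖ ^ 2 ≤ ∑ _i : Fin n, B ^ 2 := by
          apply Finset.sum_le_sum
          intro i _
          rw [Real.norm_eq_abs]
          exact pow_le_pow_left₀ (abs_nonneg _) (hx i) 2
      _ = n * B ^ 2 := by simp [Finset.sum_const, Finset.card_univ]
  calc Real.sqrt (∑ i, ‖x i‖ ^ 2) ≤ Real.sqrt ((n : ℝ) * B ^ 2) := Real.sqrt_le_sqrt h1
    _ = Real.sqrt n * B := by
        rw [Real.sqrt_mul (by positivity), Real.sqrt_sq hB]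

set_option maxHeartbeats 1000000 in
/-- Taylor remainder estimate for `x ↦ |k - x|^{α-n}` around `k⁰`:
if `|k-k⁰|_∞ ≥ 2|i-k⁰|_∞ > 0` then
`||i-k|^{α-n} - q_N(i,k)| ≤ C |i-k⁰|_∞^N |k-k⁰|_∞^{α-n-N}`. -/
theorem stmt6 (n : ℕ) (α : ℝ) (hα : 0 < α) (hαn : α < n) (N : ℕ) (hN : 0 < N) :
    ∃ C > (0 : ℝ), ∀ (i k k0 : Fin n → ℤ),
      0 < zinf (i - k0) → 2 * zinf (i - k0) ≤ zinf (k - k0) →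
      |znorm (i - k) ^ (α - n) -
          taylorPoly (fun x => ‖toE k - x‖ ^ (α - n)) (toE k0) (toE i) N|
        ≤ C * ((zinf (i - k0) : ℝ)) ^ N * ((zinf (k - k0) : ℝ)) ^ (α - n - N) := by
  obtain ⟨N', rfl⟩ : ∃ N', N = N' + 1 := ⟨N - 1, (Nat.succ_pred_eq_of_pos hN).symm⟩
  set p : ℕ := N' + 1 with hp
  set s : ℝ := α - n with hsdef
  have hs_neg : s < 0 := sub_neg.mpr hαn
  have hnR : (0 : ℝ) < n := hα.trans hαn
  have hn : 0 < n := by exact_mod_cast hnR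
  haveI : Nonempty (Fin n) := ⟨⟨0, hn⟩⟩
  have hsqrt : 0 < Real.sqrt n := Real.sqrt_pos.mpr hnR
  obtain ⟨M, hM1, hM⟩ := normDerivBound n s p
  have hMpos : 0 < M := lt_of_lt_of_le one_pos hM1
  set C : ℝ := M * 2 ^ ((p : ℝ) - s) * (Real.sqrt n) ^ p / (N'.factorial) with hCdef
  have hfact : (0 : ℝ) < N'.factorial := by positivity
  have hC : 0 < C := by
    apply div_pos _ hfact
    have h2 : (0:ℝ) < 2 ^ ((p : ℝ) - s) := Real.rpow_pos_of_pos two_pos _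
    positivity
  refine ⟨C, hC, ?_⟩
  intro i k k0 hzi hzk
  set E := EuclideanSpace ℝ (Fin n)
  set h : E → ℝ := fun y => ‖y‖ ^ s with hhdef
  have hsmooth : ∀ (m : ℕ) (u : E), u ≠ 0 → ContDiffAt ℝ m h u := fun m u hu =>
    (contDiffAt_norm ℝ hu).rpow_const_of_ne (norm_ne_zero_iff.mpr hu)
  set w : E := toE k - toE k0 with hwdef
  set v : E := toE i - toE k0 with hvdef
  set zi : ℝ := (zinf (i - k0) : ℝ) with hzidef
  set z : ℝ := (zinf (k - k0) : ℝ) with hzdef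
  have hzi1 : 1 ≤ zi := by
    have : (1:ℝ) ≤ ((zinf (i - k0) : ℕ) : ℝ) := by exact_mod_cast hzi
    exact this
  have h2zi : 2 * zi ≤ z := by
    have : (2:ℝ) * ((zinf (i - k0) : ℕ) : ℝ) ≤ ((zinf (k - k0) : ℕ) : ℝ) := by
      exact_mod_cast hzk
    exact this
  have hzpos : 0 < z := by linarith
  have hz2 : 0 < z / 2 := by linarith
  -- coordinates of v and w
  have hvl : ∀ l, v l = ((i l : ℝ)) - ((k0 l : ℝ)) := by
    intro l; rw [hvdef]; simp only [toE, PiLp.sub_apply]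
  have hwl : ∀ l, w l = ((k l : ℝ)) - ((k0 l : ℝ)) := by
    intro l; rw [hwdef]; simp only [toE, PiLp.sub_apply]
  have hvle : ∀ l, |v l| ≤ zi := by
    intro l
    have h1 : ((i - k0) l).natAbs ≤ zinf (i - k0) :=
      Finset.le_sup (f := fun l => ((i - k0) l).natAbs) (Finset.mem_univ l)
    have h2 : |v l| = (((i - k0) l).natAbs : ℝ) := by
      rw [hvl, Nat.cast_natAbs]
      push_cast [Pi.sub_apply]
      ring_nf
    rw [h2, hzidef]
    exact Nat.cast_le.mpr h1
  obtain ⟨l0, _, hl0⟩ := Finset.exists_mem_eq_sup Finset.univ Finset.univ_nonempty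
    (fun l => ((k - k0) l).natAbs)
  have hwl0 : |w l0| = z := by
    rw [hwl, hzdef]
    unfold zinf
    rw [hl0, Nat.cast_natAbs]
    push_cast [Pi.sub_apply]
    ring_nf
  -- segment estimates
  have hseg : ∀ t ∈ Set.Icc (0:ℝ) 1, z / 2 ≤ ‖w - t • v‖ := by
    intro t ht
    have hco : z / 2 ≤ |(w - t • v) l0| := by
      have happ : (w - t • v) l0 = w l0 - t * v l0 := rfl
      rw [happ]
      have h1 : |w l0| - |t * v l0| ≤ |w l0 - t * v l0| := by
        have := abs_sub_abs_le_abs_sub (w l0) (t * v l0)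
        linarith [this]
      have h2 : |t * v l0| ≤ zi := by
        rw [abs_mul]
        calc |t| * |v l0| ≤ 1 * zi := by
              apply mul_le_mul (by rw [abs_of_nonneg ht.1]; exact ht.2) (hvle l0)
                (abs_nonneg _) zero_le_one
          _ = zi := one_mul _
      rw [hwl0] at h1
      linarith
    exact le_trans hco (abs_coord_le _ l0)
  have hsegne : ∀ t ∈ Set.Icc (0:ℝ) 1, w - t • v ≠ 0 := by
    intro t ht hzero
    have := hseg t ht
    rw [hzero, norm_zero] at this
    linarith
  have hwne : w ≠ 0 := by
    have := hsegne 0 (Set.left_mem_Icc.mpr zero_le_one)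
    simpa using this
  have hvnorm : ‖v‖ ≤ Real.sqrt n * zi := norm_le_sqrt_mul v zi (by linarith) hvle
  -- the one-dimensional function
  set L : ℝ →L[ℝ] E := ContinuousLinearMap.smulRight (ContinuousLinearMap.id ℝ ℝ) (-v)
    with hLdef
  have hLapp : ∀ t : ℝ, L t = t • (-v) := fun t => rfl
  set h2 : E → ℝ := fun y => h (w + y) with hh2def
  set g1 : ℝ → ℝ := h2 ∘ L with hg1def
  have hwt : ∀ t : ℝ, w + t • (-v) = w - t • v := by
    intro t; rw [smul_neg, ← sub_eq_add_neg]
  have hg1app : ∀ t : ℝ, g1 t = h (w - t • v) := by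
    intro t
    show h2 (L t) = h (w - t • v)
    rw [hh2def]
    simp only [hLapp]
    rw [hwt]
  set O2 : Set E := {y : E | w + y ≠ 0} with hO2def
  have hO2 : IsOpen O2 := by
    have : O2 = (fun y : E => w + y) ⁻¹' ({0}ᶜ) := rfl
    rw [this]
    exact IsOpen.preimage (by continuity) isOpen_compl_singleton
  have hcd2 : ContDiffOn ℝ p h2 O2 := by
    intro y hy
    have hy' : w + y ≠ 0 := hy
    have hA : ContDiffAt ℝ p (fun y : E => w + y) y :=
      (contDiff_const.add contDiff_id).contDiffAt
    exact ((hsmooth p (w + y) hy').comp y hA).contDiffWithinAt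
  set U : Set ℝ := L ⁻¹' O2 with hUdef
  have hU : IsOpen U := hO2.preimage L.continuous
  have hIccU : Set.Icc (0:ℝ) 1 ⊆ U := by
    intro t ht
    show w + L t ≠ 0
    rw [hLapp, hwt]
    exact hsegne t ht
  have hgU : ContDiffOn ℝ p g1 U := hcd2.comp_continuousLinearMap L
  -- key derivative identity
  have keyD : ∀ r : ℕ, r ≤ p → ∀ t ∈ Set.Icc (0:ℝ) 1,
      iteratedDerivWithin r g1 (Set.Icc 0 1) t
        = iteratedFDeriv ℝ r h (w - t • v) (fun _ => -v) := by
    intro r hr t ht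
    rw [iteratedDerivWithin_eq_iteratedFDerivWithin]
    rw [iteratedFDerivWithin_subset_open hU hIccU (uniqueDiffOn_Icc zero_lt_one)
      (hgU.of_le (by exact_mod_cast hr)) ht]
    have hLtO2 : L t ∈ O2 := hIccU ht
    have hcr := L.iteratedFDerivWithin_comp_right (f := h2) hcd2 hO2.uniqueDiffOn
      hU.uniqueDiffOn (x := t) hLtO2 (by exact_mod_cast hr)
    rw [iteratedFDerivWithin_of_isOpen r hU (hIccU ht),
      iteratedFDerivWithin_of_isOpen r hO2 hLtO2] at hcr
    have happ := congrArg (fun T : ContinuousMultilinearMap ℝ (fun _ : Fin r => ℝ) ℝ =>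
      T (fun _ => (1:ℝ))) hcr
    simp only [ContinuousMultilinearMap.compContinuousLinearMap_apply] at happ
    rw [hg1def, happ]
    have hshift := iteratedFDeriv_comp_const_add' w h r (L t)
    rw [hh2def]
    rw [hshift]
    have hL1 : ∀ _l : Fin r, L 1 = -v := fun _ => by rw [hLapp, one_smul]
    have : (fun _l : Fin r => L 1) = (fun _l : Fin r => -v) := funext hL1
    rw [this]
    congr 1
    rw [hLapp, hwt]
  -- derivative bound
  set C' : ℝ := M * (z / 2) ^ (s - (p : ℝ)) * (Real.sqrt n * zi) ^ p with hC'def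
  have hC'bound : ∀ y ∈ Set.Icc (0:ℝ) 1,
      ‖iteratedDerivWithin p g1 (Set.Icc 0 1) y‖ ≤ C' := by
    intro y hy
    rw [keyD p le_rfl y hy]
    have hune : w - y • v ≠ 0 := hsegne y hy
    have h1 : ‖iteratedFDeriv ℝ p h (w - y • v) (fun _ => -v)‖
        ≤ ‖iteratedFDeriv ℝ p h (w - y • v)‖ * ‖v‖ ^ p := by
      have := (iteratedFDeriv ℝ p h (w - y • v)).le_opNorm (fun _ => -v)
      simpa [Finset.prod_const, Finset.card_univ] using this
    have h2' : ‖iteratedFDeriv ℝ p h (w - y • v)‖ ≤ M * ‖w - y • v‖ ^ (s - (p:ℝ)) := by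
      have := hM (w - y • v) hune
      exact_mod_cast this
    have h3 : ‖w - y • v‖ ^ (s - (p:ℝ)) ≤ (z / 2) ^ (s - (p:ℝ)) :=
      Real.rpow_le_rpow_of_nonpos hz2 (hseg y hy) (by push_cast; nlinarith [hs_neg])
    have h4 : ‖v‖ ^ p ≤ (Real.sqrt n * zi) ^ p :=
      pow_le_pow_left₀ (norm_nonneg _) hvnorm p
    have h5 : (0:ℝ) ≤ ‖v‖ ^ p := by positivity
    calc ‖iteratedFDeriv ℝ p h (w - y • v) (fun _ => -v)‖
        ≤ ‖iteratedFDeriv ℝ p h (w - y • v)‖ * ‖v‖ ^ p := h1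
      _ ≤ (M * (z / 2) ^ (s - (p:ℝ))) * (Real.sqrt n * zi) ^ p := by
          apply mul_le_mul (h2'.trans ?_) h4 h5 (by positivity)
          exact mul_le_mul_of_nonneg_left h3 hMpos.le
      _ = C' := by rw [hC'def]
  -- Taylor's theorem
  have hg1Icc : ContDiffOn ℝ ((N' : WithTop ℕ∞) + 1) g1 (Set.Icc (0:ℝ) 1) := by
    have hcast : ((N' : WithTop ℕ∞) + 1) = ((p : ℕ) : WithTop ℕ∞) := by
      rw [hp]; push_cast; rfl
    rw [hcast]
    exact hgU.mono hIccU
  have htaylor := taylor_mean_remainder_bound (f := g1) (a := 0) (b := 1) (x := 1)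
    (n := N') (C := C') zero_le_one hg1Icc
    (Set.right_mem_Icc.mpr zero_le_one) hC'bound
  -- identify g1 1
  have hwv : w - (1:ℝ) • v = toE k - toE i := by
    rw [one_smul, hwdef, hvdef]; abel
  have hnormeq : ‖toE k - toE i‖ = znorm (i - k) := by
      rw [EuclideanSpace.norm_eq]
      unfold znorm
      congr 1
      apply Finset.sum_congr rfl
      intro l _
      have : (toE k - toE i) l = ((k l : ℝ)) - ((i l : ℝ)) := by
        simp only [toE, PiLp.sub_apply]
      rw [this, Real.norm_eq_abs, sq_abs, Pi.sub_apply]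
      push_cast
      ring
  have hg1val : g1 1 = znorm (i - k) ^ (α - (n:ℝ)) := by
    have h1 : g1 1 = ‖toE k - toE i‖ ^ s := by rw [hg1app, hwv]
    rw [h1, hnormeq, hsdef]
  -- identify the Taylor polynomial
  have hiter : ∀ r : ℕ, r ≤ p →
      iteratedFDeriv ℝ r (fun x : E => ‖toE k - x‖ ^ (α - (n:ℝ))) (toE k0) (fun _ => v)
        = iteratedFDeriv ℝ r h w (fun _ => -v) := by
    intro r hr
    set Lneg : E →L[ℝ] E := -(ContinuousLinearMap.id ℝ E) with hLnegdef
    have hLnegapp : ∀ x : E, Lneg x = -x := fun x => rfl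
    set h3 : E → ℝ := fun y => h (toE k + y) with hh3def
    have hfeq : (fun x : E => ‖toE k - x‖ ^ (α - (n:ℝ))) = h3 ∘ Lneg := by
      funext x
      show ‖toE k - x‖ ^ s = h (toE k + Lneg x)
      rw [hLnegapp, ← sub_eq_add_neg]
    set O3 : Set E := {y : E | toE k + y ≠ 0} with hO3def
    have hO3 : IsOpen O3 := by
      have : O3 = (fun y : E => toE k + y) ⁻¹' ({0}ᶜ) := rfl
      rw [this]
      exact IsOpen.preimage (by continuity) isOpen_compl_singleton
    have hcd3 : ContDiffOn ℝ p h3 O3 := by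
      intro y hy
      have hy' : toE k + y ≠ 0 := hy
      exact ((hsmooth p (toE k + y) hy').comp y
        ((contDiff_const.add contDiff_id).contDiffAt)).contDiffWithinAt
    have hpre3 : IsOpen (Lneg ⁻¹' O3) := hO3.preimage Lneg.continuous
    have hk0mem : Lneg (toE k0) ∈ O3 := by
      show toE k + Lneg (toE k0) ≠ 0
      rw [hLnegapp, ← sub_eq_add_neg]
      exact hwne
    have hcr := Lneg.iteratedFDerivWithin_comp_right (f := h3) hcd3 hO3.uniqueDiffOn
      hpre3.uniqueDiffOn (x := toE k0) hk0mem (by exact_mod_cast hr)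
    rw [iteratedFDerivWithin_of_isOpen r hpre3 hk0mem,
      iteratedFDerivWithin_of_isOpen r hO3 hk0mem] at hcr
    rw [hfeq]
    have happ := congrArg (fun T : ContinuousMultilinearMap ℝ (fun _ : Fin r => E) ℝ =>
      T (fun _ => v)) hcr
    simp only [ContinuousMultilinearMap.compContinuousLinearMap_apply] at happ
    rw [happ]
    have hshift := iteratedFDeriv_comp_const_add' (toE k) h r (Lneg (toE k0))
    rw [hh3def, hshift, hLnegapp, ← sub_eq_add_neg, ← hwdef]
    congr 1
  have htaypoly : taylorWithinEval g1 N' (Set.Icc 0 1) 0 1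
      = taylorPoly (fun x : E => ‖toE k - x‖ ^ (α - (n:ℝ))) (toE k0) (toE i) p := by
    rw [taylor_within_apply]
    unfold taylorPoly
    apply Finset.sum_congr rfl
    intro r hr
    have hrp : r ≤ p := by
      rw [Finset.mem_range] at hr; omega
    rw [keyD r hrp 0 (Set.left_mem_Icc.mpr zero_le_one)]
    have h0 : w - (0:ℝ) • v = w := by rw [zero_smul, sub_zero]
    rw [h0]
    have hvv : toE i - toE k0 = v := rfl
    rw [hvv, hiter r hrp]
    simp [smul_eq_mul]
    try ring
  -- final computation
  rw [← hg1val, ← htaypoly]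
  have hC'eq : C' * (1 - 0) ^ (N' + 1) / N'.factorial
      = C * zi ^ p * z ^ (α - (n:ℝ) - p) := by
    have hdiv : (z / 2) ^ (s - (p:ℝ)) = z ^ (s - (p:ℝ)) * 2 ^ ((p:ℝ) - s) := by
      rw [Real.div_rpow hzpos.le (by norm_num : (0:ℝ) ≤ 2)]
      rw [div_eq_mul_inv, ← Real.rpow_neg (by norm_num : (0:ℝ) ≤ 2), neg_sub]
    rw [hC'def, hCdef, hdiv, mul_pow]
    have hexp : s - (p:ℝ) = α - (n:ℝ) - (p:ℝ) := by rw [hsdef]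
    rw [hexp]
    field_simp
    ring
  calc |g1 1 - taylorWithinEval g1 N' (Set.Icc 0 1) 0 1|
      ≤ C' * (1 - 0) ^ (N' + 1) / N'.factorial := by
        have := htaylor
        rwa [Real.norm_eq_abs] at this
    _ = C * zi ^ p * z ^ (α - (n:ℝ) - p) := hC'eq
    _ = C * ((zinf (i - k0) : ℝ)) ^ (N' + 1) * ((zinf (k - k0) : ℝ)) ^ (α - n - (N' + 1 : ℕ)) := by
        rw [hzidef, hzdef, hp]
        try norm_num
end
end
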